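/- Let W be a hypergeometric random variable with parameters (n, m, K) (population size n, m draws, K successes), and let ε > 0. Then P(|W/m − K/n| > ε) ≤ 2·exp(−2mε²). -/

import Mathlib

open Real

lemma bern_mgf {p : ℝ} (hp0 : 0 ≤ p) (hp1 : p ≤ 1) (t : ℝ) :
    1 - p + p * Real.exp t ≤ Real.exp (t * p + t ^ 2 / 8) := by
  rcases eq_or_lt_of_le hp0 with h0 | h0
  · simp only [← h0, sub_zero, zero_mul, add_zero, mul_zero, zero_add]
    exact Real.one_le_exp (by positivity)
  rcases eq_or_lt_of_le hp1 with h1 | h1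
  · subst h1
    simp only [sub_self, one_mul, zero_add, mul_one]
    exact Real.exp_le_exp.2 (by nlinarith [sq_nonneg t])
  -- 0 < p < 1
  have hq0 : 0 < 1 - p := by linarith
  have hD : ∀ s : ℝ, 0 < 1 - p + p * Real.exp s := fun s => by
    have := Real.exp_pos s; nlinarith
  set f : ℝ → ℝ := fun s => s * p + s ^ 2 / 8 - Real.log (1 - p + p * Real.exp s) with hfdef
  set g : ℝ → ℝ := fun s => p + s / 4 - p * Real.exp s / (1 - p + p * Real.exp s) with hgdef
  have hDer : ∀ s : ℝ, HasDerivAt f (g s) s := by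
    intro s
    have h1 : HasDerivAt (fun s : ℝ => s * p + s ^ 2 / 8) (p + s / 4) s := by
      have := ((hasDerivAt_id s).mul_const p).add (((hasDerivAt_pow 2 s).div_const 8))
      exact this.congr_deriv (by norm_num; ring)
    have h2 : HasDerivAt (fun s : ℝ => 1 - p + p * Real.exp s) (p * Real.exp s) s := by
      simpa using (Real.hasDerivAt_exp s).const_mul p |>.const_add (1 - p)
    have h3 := (h2.log (hD s).ne')
    exact h1.sub h3
  have hDer2 : ∀ s : ℝ, HasDerivAt g
      (1 / 4 - (p * Real.exp s * (1 - p)) / (1 - p + p * Real.exp s) ^ 2) s := by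
    intro s
    have h2 : HasDerivAt (fun s : ℝ => 1 - p + p * Real.exp s) (p * Real.exp s) s := by
      simpa using (Real.hasDerivAt_exp s).const_mul p |>.const_add (1 - p)
    have hnum : HasDerivAt (fun s : ℝ => p * Real.exp s) (p * Real.exp s) s := by
      simpa using (Real.hasDerivAt_exp s).const_mul p
    have hquot := hnum.div h2 (hD s).ne'
    have hlin : HasDerivAt (fun s : ℝ => p + s / 4) (1 / 4) s := by
      simpa using ((hasDerivAt_id s).div_const 4).const_add p
    have := hlin.sub hquot
    have hx := (hD s).ne'
    refine this.congr_deriv ?_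
    field_simp
    ring
  have hg' : ∀ s : ℝ, 0 ≤ 1 / 4 - (p * Real.exp s * (1 - p)) / (1 - p + p * Real.exp s) ^ 2 := by
    intro s
    rw [sub_nonneg, div_le_iff₀ (by positivity)]
    nlinarith [sq_nonneg (1 - p - p * Real.exp s), Real.exp_pos s]
  have hgmono : Monotone g := by
    have hdiff : Differentiable ℝ g := fun s => (hDer2 s).differentiableAt
    apply monotone_of_deriv_nonneg hdiff
    intro s
    rw [(hDer2 s).deriv]
    exact hg' s
  have hg0 : g 0 = 0 := by
    simp [hgdef]
  have hf0 : f 0 = 0 := by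
    simp [hfdef]
  have hfd : Differentiable ℝ f := fun s => (hDer s).differentiableAt
  have hfnonneg : ∀ s : ℝ, 0 ≤ f s := by
    intro s
    rcases le_or_gt 0 s with hs | hs
    · have hmo : MonotoneOn f (Set.Ici 0) := by
        apply monotoneOn_of_deriv_nonneg (convex_Ici 0) hfd.continuous.continuousOn
          (fun x _ => (hfd x).differentiableWithinAt)
        intro x hx
        rw [(hDer x).deriv]
        rw [interior_Ici, Set.mem_Ioi] at hx
        rw [← hg0]
        exact hgmono hx.le
      have := hmo (Set.self_mem_Ici) (Set.mem_Ici.2 hs) hs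
      linarith [hf0 ▸ this]
    · have hmo : AntitoneOn f (Set.Iic 0) := by
        apply antitoneOn_of_deriv_nonpos (convex_Iic 0) hfd.continuous.continuousOn
          (fun x _ => (hfd x).differentiableWithinAt)
        intro x hx
        rw [(hDer x).deriv]
        rw [interior_Iic, Set.mem_Iio] at hx
        rw [← hg0]
        exact hgmono hx.le
      have := hmo (Set.mem_Iic.2 hs.le) (Set.self_mem_Iic) hs.le
      linarith [hf0 ▸ this]
  have := hfnonneg t
  have hlog : Real.log (1 - p + p * Real.exp t) ≤ t * p + t ^ 2 / 8 := by
    simp only [hfdef] at this; linarith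
  calc 1 - p + p * Real.exp t = Real.exp (Real.log (1 - p + p * Real.exp t)) :=
        (Real.exp_log (hD t)).symm
    _ ≤ _ := Real.exp_le_exp.2 hlog

private def esum : List ℝ → ℕ → ℝ
  | _, 0 => 1
  | [], _+1 => 0
  | a :: l, k+1 => esum l (k+1) + a * esum l k

lemma esum_zero (l : List ℝ) : esum l 0 = 1 := by cases l <;> rfl

lemma esum_nil_succ (k : ℕ) : esum [] (k+1) = 0 := rfl

lemma esum_cons (a : ℝ) (l : List ℝ) (k : ℕ) :
    esum (a :: l) (k+1) = esum l (k+1) + a * esum l k := rfl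

lemma esum_nonneg {l : List ℝ} (h : ∀ x ∈ l, 0 ≤ x) : ∀ k, 0 ≤ esum l k := by
  induction l with
  | nil => intro k; cases k <;> simp [esum_zero, esum_nil_succ]
  | cons a l ih =>
    intro k
    cases k with
    | zero => simp [esum_zero]
    | succ k =>
      rw [esum_cons]
      have h0 : 0 ≤ a := h a (List.mem_cons_self)
      have h1 : ∀ x ∈ l, 0 ≤ x := fun x hx => h x (List.mem_cons_of_mem a hx)
      have h2 := ih h1 (k+1)
      have h3 := ih h1 k
      nlinarith

lemma esum_one (l : List ℝ) : esum l 1 = l.sum := by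
  induction l with
  | nil => simp [esum_nil_succ]
  | cons a l ih => rw [esum_cons, ih, esum_zero]; simp; ring

lemma esum_perm {l l' : List ℝ} (h : l.Perm l') : ∀ k, esum l k = esum l' k := by
  induction h with
  | nil => intro k; rfl
  | cons a _ ih =>
    intro k
    cases k with
    | zero => simp [esum_zero]
    | succ k => rw [esum_cons, esum_cons, ih, ih]
  | swap a b l =>
    intro k
    match k with
    | 0 => simp [esum_zero]
    | 1 => simp [esum_cons, esum_one, esum_zero]; ring
    | (k+2) => simp only [esum_cons]; ring
  | trans _ _ ih1 ih2 => intro k; rw [ih1, ih2]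

lemma esum_replicate (c : ℝ) : ∀ j k : ℕ, esum (List.replicate j c) k = (j.choose k) * c ^ k := by
  intro j
  induction j with
  | zero => intro k; cases k with
    | zero => simp [esum_zero]
    | succ k => simp [List.replicate, esum_nil_succ]
  | succ j ih =>
    intro k
    cases k with
    | zero => simp [esum_zero]
    | succ k =>
      rw [List.replicate_succ, esum_cons, ih, ih, Nat.choose_succ_succ]
      push_cast
      ring

lemma esum_append (l₂ : List ℝ) :
    ∀ (l₁ : List ℝ) (k : ℕ), esum (l₁ ++ l₂) k
      = ∑ i ∈ Finset.range (k+1), esum l₁ i * esum l₂ (k - i) := by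
  intro l₁
  induction l₁ with
  | nil =>
    intro k
    rw [List.nil_append]
    rw [Finset.sum_eq_single 0]
    · simp [esum_zero]
    · intro b _ hb
      obtain ⟨j, rfl⟩ := Nat.exists_eq_succ_of_ne_zero hb
      simp [esum_nil_succ]
    · intro h; exact absurd (Finset.mem_range.2 (Nat.succ_pos k)) h
  | cons a l₁ ih =>
    intro k
    cases k with
    | zero => simp [esum_zero]
    | succ k =>
      rw [List.cons_append, esum_cons, ih (k+1), ih k]
      rw [Finset.sum_range_succ' (fun i => esum (a :: l₁) i * esum l₂ (k + 1 - i)) (k+1)]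
      rw [Finset.sum_range_succ' (fun i => esum l₁ i * esum l₂ (k + 1 - i)) (k+1)]
      simp only [esum_cons, esum_zero, Nat.succ_sub_succ]
      rw [Finset.mul_sum, add_right_comm, add_left_inj, ← Finset.sum_add_distrib]
      apply Finset.sum_congr rfl
      intro i _
      ring

lemma list_exists_min (l : List ℝ) (h : l ≠ []) : ∃ a ∈ l, ∀ x ∈ l, a ≤ x := by
  induction l with
  | nil => exact absurd rfl h
  | cons a l ih =>
    cases l with
    | nil => exact ⟨a, List.mem_cons_self, by simp⟩
    | cons b t =>
      obtain ⟨c, hc, hcmin⟩ := ih (by simp)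
      rcases le_total a c with hac | hca
      · exact ⟨a, List.mem_cons_self, by
          intro x hx
          rcases List.mem_cons.1 hx with rfl | hx
          · exact le_rfl
          · exact le_trans hac (hcmin x hx)⟩
      · exact ⟨c, List.mem_cons_of_mem a hc, by
          intro x hx
          rcases List.mem_cons.1 hx with rfl | hx
          · exact hca
          · exact hcmin x hx⟩

lemma list_exists_max (l : List ℝ) (h : l ≠ []) : ∃ a ∈ l, ∀ x ∈ l, x ≤ a := by
  obtain ⟨a, ha, hmin⟩ := list_exists_min (l.map (fun x => -x)) (by simpa using h)
  obtain ⟨b, hb, rfl⟩ := List.mem_map.1 ha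
  refine ⟨b, hb, fun x hx => ?_⟩
  have := hmin (-x) (List.mem_map.2 ⟨x, hx, rfl⟩)
  linarith

lemma list_card_mul_le_sum (l : List ℝ) (c : ℝ) (h : ∀ x ∈ l, c ≤ x) :
    (l.length : ℝ) * c ≤ l.sum := by
  induction l with
  | nil => simp
  | cons a l ih =>
    have h1 := ih (fun x hx => h x (List.mem_cons_of_mem a hx))
    have h2 := h a (List.mem_cons_self)
    simp only [List.length_cons, List.sum_cons]
    push_cast
    nlinarith

lemma list_sum_map_neg (l : List ℝ) : (List.map (fun x : ℝ => -x) l).sum = -l.sum := by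
  induction l with
  | nil => simp
  | cons a l ih => simp [ih]; ring

lemma list_sum_le_card_mul (l : List ℝ) (c : ℝ) (h : ∀ x ∈ l, x ≤ c) :
    l.sum ≤ (l.length : ℝ) * c := by
  have := list_card_mul_le_sum (l.map (fun x => -x)) (-c) (by
    intro x hx; obtain ⟨b, hb, rfl⟩ := List.mem_map.1 hx; simpa using h b hb)
  rw [list_sum_map_neg] at this
  simp at this
  linarith

lemma maclaurin (N : ℕ) : ∀ (l : List ℝ), l.length = N → (∀ x ∈ l, 0 ≤ x) → ∀ k : ℕ,
    esum l k ≤ (N.choose k : ℝ) * (l.sum / N) ^ k := by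
  induction N using Nat.strong_induction_on with
  | _ N IH =>
  rcases N with _ | _ | M
  · intro l hlen _ k
    obtain rfl := List.length_eq_zero_iff.1 hlen
    cases k with
    | zero => simp [esum_zero]
    | succ k => simp [esum_nil_succ]
  · intro l hlen hpos k
    obtain ⟨a, rfl⟩ := List.length_eq_one_iff.1 hlen
    have ha : 0 ≤ a := hpos a (by simp)
    match k with
    | 0 => simp [esum_zero]
    | 1 => simp [esum_cons, esum_zero, esum_nil_succ]
    | (j+2) =>
      have : (1 : ℕ).choose (j+2) = 0 := Nat.choose_eq_zero_of_lt (by omega)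
      simp [esum_cons, esum_nil_succ, this]
  · intro l hlen hpos k
    -- N = M + 2
    set S : ℝ := l.sum with hS
    have hNpos : (0:ℝ) < (M + 2 : ℕ) := by positivity
    set μ : ℝ := S / ((M + 2 : ℕ) : ℝ) with hμ
    have hSum : S = ((M + 2 : ℕ) : ℝ) * μ := by rw [hμ]; field_simp
    have hlne : l ≠ [] := by intro h; rw [h] at hlen; simp at hlen
    obtain ⟨a, ha, hamin⟩ := list_exists_min l hlne
    have perm1 : l.Perm (a :: l.erase a) := List.perm_cons_erase ha
    set l₂ := l.erase a with hl₂
    have hlen₂ : l₂.length = M + 1 := by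
      have := perm1.length_eq; rw [hlen] at this; simpa using this.symm
    have hl₂ne : l₂ ≠ [] := by intro h; rw [h] at hlen₂; simp at hlen₂
    have hsum₂ : l₂.sum = S - a := by
      have := perm1.sum_eq; rw [← hS] at this; simp at this; linarith
    obtain ⟨b, hb, hbmax⟩ := list_exists_max l₂ hl₂ne
    have perm2 : l₂.Perm (b :: l₂.erase b) := List.perm_cons_erase hb
    set l₃ := l₂.erase b with hl₃
    have hlen₃ : l₃.length = M := by
      have := perm2.length_eq; rw [hlen₂] at this; simpa using this.symm
    have hsum₃ : l₃.sum = S - a - b := by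
      have := perm2.sum_eq; rw [hsum₂] at this; simp at this; linarith
    have perm : l.Perm (a :: b :: l₃) := perm1.trans (List.Perm.cons a perm2)
    have hmem₃ : ∀ x ∈ l₃, x ∈ l := fun x hx =>
      List.erase_subset (List.erase_subset hx)
    have hpos₃ : ∀ x ∈ l₃, 0 ≤ x := fun x hx => hpos x (hmem₃ x hx)
    have ha0 : 0 ≤ a := hpos a ha
    have hb0 : 0 ≤ b := hpos b (List.erase_subset hb)
    have haμ : a ≤ μ := by
      have h1 := list_card_mul_le_sum l a hamin
      rw [hlen, ← hS] at h1
      rw [hμ, le_div_iff₀ hNpos]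
      linarith
    have hμb : μ ≤ b := by
      have h1 := list_sum_le_card_mul l₂ b hbmax
      rw [hlen₂, hsum₂] at h1
      have hM1 : (0:ℝ) < ((M+1 : ℕ) : ℝ) := by positivity
      have : ((M+1:ℕ):ℝ) * μ ≤ ((M+1:ℕ):ℝ) * b := by
        push_cast at h1 hSum ⊢
        nlinarith
      exact le_of_mul_le_mul_left this hM1
    have hμ0 : 0 ≤ μ := le_trans ha0 haμ
    set l₄ : List ℝ := (a + b - μ) :: l₃ with hl₄
    have hlen₄ : l₄.length = M + 1 := by simp [hl₄, hlen₃]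
    have hpos₄ : ∀ x ∈ l₄, 0 ≤ x := by
      intro x hx
      rcases List.mem_cons.1 hx with rfl | hx
      · linarith
      · exact hpos₃ x hx
    have hsum₄ : l₄.sum = ((M+1:ℕ):ℝ) * μ := by
      simp [hl₄, hsum₃]
      push_cast at hSum ⊢
      linarith
    have IH4 : ∀ k : ℕ, esum l₄ k ≤ ((M+1).choose k : ℝ) * μ ^ k := by
      intro k
      have := IH (M+1) (by omega) l₄ hlen₄ hpos₄ k
      rwa [hsum₄, mul_div_cancel_left₀ _ (by positivity : ((M+1:ℕ):ℝ) ≠ 0)] at this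
    match k with
    | 0 => simp [esum_zero]
    | 1 =>
      rw [esum_one, Nat.choose_one_right, pow_one, ← hS, hSum]
    | (j+2) =>
      have e1 : esum l (j+2)
          = esum l₃ (j+2) + (a+b) * esum l₃ (j+1) + (a*b) * esum l₃ j := by
        rw [esum_perm perm, esum_cons, esum_cons, esum_cons]; ring
      have e2 : esum (μ :: l₄) (j+2)
          = esum l₃ (j+2) + (a+b) * esum l₃ (j+1) + (μ*(a+b-μ)) * esum l₃ j := by
        rw [esum_cons, hl₄, esum_cons, esum_cons]; ring
      have hstep : esum l (j+2) ≤ esum (μ :: l₄) (j+2) := by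
        rw [e1, e2]
        have h3 := esum_nonneg hpos₃ j
        nlinarith [mul_nonneg (mul_nonneg (sub_nonneg.2 haμ) (sub_nonneg.2 hμb)) h3]
      have hstep2 : esum (μ :: l₄) (j+2) = esum l₄ (j+2) + μ * esum l₄ (j+1) := esum_cons _ _ _
      calc esum l (j+2) ≤ esum l₄ (j+2) + μ * esum l₄ (j+1) := by rw [← hstep2]; exact hstep
        _ ≤ ((M+1).choose (j+2) : ℝ) * μ ^ (j+2) + μ * (((M+1).choose (j+1) : ℝ) * μ ^ (j+1)) := by
            exact add_le_add (IH4 _) (mul_le_mul_of_nonneg_left (IH4 _) hμ0)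
        _ = ((M+1+1).choose (j+2) : ℝ) * μ ^ (j+2) := by
            rw [Nat.choose_succ_succ (M+1) (j+1)]
            push_cast
            ring

lemma key_sum (n m K : ℕ) (hK : K ≤ n) (hn : 0 < n) (y : ℝ) (hy : 0 ≤ y) :
    ∑ i ∈ Finset.range (m+1), (K.choose i : ℝ) * ((n-K).choose (m-i) : ℝ) * y ^ i
      ≤ (n.choose m : ℝ) * (((K:ℝ) * y + ((n-K:ℕ):ℝ)) / n) ^ m := by
  set l : List ℝ := List.replicate K y ++ List.replicate (n-K) 1 with hl
  have hlen : l.length = n := by simp [hl]; omega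
  have hpos : ∀ x ∈ l, 0 ≤ x := by
    intro x hx
    rcases List.mem_append.1 hx with hx | hx
    · rw [List.eq_of_mem_replicate hx]; exact hy
    · rw [List.eq_of_mem_replicate hx]; norm_num
  have hsum : l.sum = (K:ℝ) * y + ((n-K:ℕ):ℝ) := by
    simp [hl, List.sum_replicate, nsmul_eq_mul]
  have hesum : esum l m = ∑ i ∈ Finset.range (m+1),
      (K.choose i : ℝ) * ((n-K).choose (m-i) : ℝ) * y ^ i := by
    rw [hl, esum_append]
    apply Finset.sum_congr rfl
    intro i _
    rw [esum_replicate, esum_replicate, one_pow]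
    ring
  have := maclaurin n l hlen hpos m
  rw [hesum, hsum] at this
  exact this
open MeasureTheory

theorem stmt12 {Ω : Type*} [MeasurableSpace Ω] (μ : Measure Ω) [IsProbabilityMeasure μ]
    (n m K : ℕ) (hm : 0 < m) (hmn : m ≤ n) (hK : K ≤ n)
    (W : Ω → ℕ) (hW : Measurable W)
    (hdist : ∀ w ≤ m, μ {ω | W ω = w} =
      ENNReal.ofReal ((K.choose w * (n - K).choose (m - w) : ℕ) / (n.choose m : ℝ)))
    (hdist' : ∀ w, m < w → μ {ω | W ω = w} = 0)
    (ε : ℝ) (hε : 0 < ε) :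
    (μ {ω | ε < |(W ω : ℝ)/m - (K:ℝ)/n|}).toReal ≤ 2 * Real.exp (-2*m*ε^2) := by
  have hn : 0 < n := lt_of_lt_of_le hm hmn
  have hmR : (0:ℝ) < (m:ℕ) := by exact_mod_cast hm
  have hnR : (0:ℝ) < (n:ℕ) := by exact_mod_cast hn
  set p : ℝ := (K:ℝ)/(n:ℝ) with hp
  have hp0 : 0 ≤ p := by positivity
  have hp1 : p ≤ 1 := by
    rw [hp, div_le_one hnR]; exact_mod_cast hK
  set h : ℝ := 4*ε with hh
  have hh0 : 0 < h := by positivity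
  set pm : ℕ → ℝ := fun w =>
    ((K.choose w * (n - K).choose (m - w) : ℕ) : ℝ) / ((n.choose m : ℕ) : ℝ) with hpm
  have hpm0 : ∀ w, 0 ≤ pm w := fun w => by positivity
  set T : Finset ℕ := (Finset.range (m+1)).filter
    (fun w => ε < |(w:ℝ)/(m:ℝ) - (K:ℝ)/(n:ℝ)|) with hT
  -- Step A : measure bound
  have hB : μ {ω | m < W ω} = 0 := by
    have hset : {ω | m < W ω} = ⋃ k, ⋃ (_ : m < k), {ω | W ω = k} := by
      ext ω
      simp only [Set.mem_setOf_eq, Set.mem_iUnion]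
      exact ⟨fun hω => ⟨W ω, hω, rfl⟩, fun ⟨k, hk, he⟩ => he ▸ hk⟩
    rw [hset]
    exact measure_iUnion_null fun k => measure_iUnion_null fun hk => hdist' k hk
  have hsub : {ω | ε < |(W ω : ℝ)/(m:ℝ) - (K:ℝ)/(n:ℝ)|}
      ⊆ (⋃ w ∈ T, {ω | W ω = w}) ∪ {ω | m < W ω} := by
    intro ω hω
    rcases le_or_gt (W ω) m with hle | hlt
    · left
      have hWT : W ω ∈ T := by
        rw [hT, Finset.mem_filter, Finset.mem_range]
        exact ⟨Nat.lt_succ_of_le hle, hω⟩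
      exact Set.mem_biUnion hWT rfl
    · right; exact hlt
  have hstepA : μ {ω | ε < |(W ω : ℝ)/(m:ℝ) - (K:ℝ)/(n:ℝ)|}
      ≤ ENNReal.ofReal (∑ w ∈ T, pm w) := by
    calc μ {ω | ε < |(W ω : ℝ)/(m:ℝ) - (K:ℝ)/(n:ℝ)|}
        ≤ μ ((⋃ w ∈ T, {ω | W ω = w}) ∪ {ω | m < W ω}) := measure_mono hsub
      _ ≤ μ (⋃ w ∈ T, {ω | W ω = w}) + μ {ω | m < W ω} := measure_union_le _ _
      _ = μ (⋃ w ∈ T, {ω | W ω = w}) := by rw [hB, add_zero]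
      _ ≤ ∑ w ∈ T, μ {ω | W ω = w} := measure_biUnion_finset_le T _
      _ = ∑ w ∈ T, ENNReal.ofReal (pm w) := by
          apply Finset.sum_congr rfl
          intro w hw
          rw [hT, Finset.mem_filter, Finset.mem_range] at hw
          exact hdist w (Nat.lt_succ_iff.1 hw.1)
      _ = ENNReal.ofReal (∑ w ∈ T, pm w) :=
          (ENNReal.ofReal_sum_of_nonneg fun w _ => hpm0 w).symm
  -- Step B : real bound
  have hC : (0:ℝ) < ((n.choose m : ℕ) : ℝ) := by
    exact_mod_cast Nat.choose_pos hmn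
  have key : ∀ z : ℝ, 0 < z → ∑ w ∈ Finset.range (m+1), pm w * z^w
      ≤ (((K:ℝ) * z + ((n-K:ℕ):ℝ))/(n:ℝ))^m := by
    intro z hz
    have h1 : ∑ w ∈ Finset.range (m+1), pm w * z^w
        = (∑ w ∈ Finset.range (m+1),
            (K.choose w : ℝ) * ((n-K).choose (m-w) : ℝ) * z^w) / ((n.choose m : ℕ) : ℝ) := by
      rw [Finset.sum_div]
      apply Finset.sum_congr rfl
      intro w _
      rw [hpm]
      push_cast
      ring
    rw [h1]
    rw [div_le_iff₀ hC]
    calc (∑ w ∈ Finset.range (m+1), (K.choose w : ℝ) * ((n-K).choose (m-w) : ℝ) * z^w)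
        ≤ ((n.choose m : ℕ):ℝ) * (((K:ℝ) * z + ((n-K:ℕ):ℝ))/(n:ℝ))^m :=
          key_sum n m K hK hn z hz.le
      _ = (((K:ℝ) * z + ((n-K:ℕ):ℝ))/(n:ℝ))^m * ((n.choose m : ℕ):ℝ) := by ring
  have hcast : ((n-K:ℕ):ℝ) = (n:ℝ) - (K:ℝ) := Nat.cast_sub hK
  have hθpos : ∀ z : ℝ, 0 < z → 0 ≤ ((K:ℝ) * z + ((n-K:ℕ):ℝ))/(n:ℝ) := by
    intro z hz; positivity
  have hθh : ((K:ℝ) * Real.exp h + ((n-K:ℕ):ℝ))/(n:ℝ) ≤ Real.exp (h*p + h^2/8) := by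
    have := bern_mgf hp0 hp1 h
    rw [hcast]
    have hpe : ((K:ℝ) * Real.exp h + ((n:ℝ) - (K:ℝ)))/(n:ℝ) = 1 - p + p * Real.exp h := by
      rw [hp]; field_simp; ring
    rw [hpe]
    linarith
  have hθh' : ((K:ℝ) * Real.exp (-h) + ((n-K:ℕ):ℝ))/(n:ℝ) ≤ Real.exp (-(h*p) + h^2/8) := by
    have := bern_mgf hp0 hp1 (-h)
    rw [hcast]
    have hpe : ((K:ℝ) * Real.exp (-h) + ((n:ℝ) - (K:ℝ)))/(n:ℝ) = 1 - p + p * Real.exp (-h) := by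
      rw [hp]; field_simp; ring
    rw [hpe]
    have harg : (-h)*p + (-h)^2/8 = -(h*p) + h^2/8 := by ring
    rw [harg] at this
    linarith
  have hstepB : ∑ w ∈ T, pm w ≤ 2 * Real.exp (-2*(m:ℝ)*ε^2) := by
    have hb1 : ∑ w ∈ T, pm w ≤ ∑ w ∈ T, pm w *
        (Real.exp (h*((w:ℝ) - (p+ε)*(m:ℝ))) + Real.exp (h*((p-ε)*(m:ℝ) - (w:ℝ)))) := by
      apply Finset.sum_le_sum
      intro w hw
      rw [hT, Finset.mem_filter] at hw
      have hcond := hw.2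
      have hfac : 1 ≤ Real.exp (h*((w:ℝ) - (p+ε)*(m:ℝ))) + Real.exp (h*((p-ε)*(m:ℝ) - (w:ℝ))) := by
        rw [show (K:ℝ)/(n:ℝ) = p from rfl] at hcond
        rcases lt_abs.1 hcond with hc | hc
        · have hc2 : p + ε < (w:ℝ)/(m:ℝ) := by linarith
          have hw1 : (p+ε)*(m:ℝ) ≤ (w:ℝ) := ((lt_div_iff₀ hmR).1 hc2).le
          have h1 : 1 ≤ Real.exp (h*((w:ℝ) - (p+ε)*(m:ℝ))) :=
            Real.one_le_exp (mul_nonneg hh0.le (by linarith))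
          have h2 := Real.exp_nonneg (h*((p-ε)*(m:ℝ) - (w:ℝ)))
          linarith
        · have hc2 : (w:ℝ)/(m:ℝ) < p - ε := by linarith
          have hw1 : (w:ℝ) ≤ (p-ε)*(m:ℝ) := ((div_lt_iff₀ hmR).1 hc2).le
          have h1 : 1 ≤ Real.exp (h*((p-ε)*(m:ℝ) - (w:ℝ))) :=
            Real.one_le_exp (mul_nonneg hh0.le (by linarith))
          have h2 := Real.exp_nonneg (h*((w:ℝ) - (p+ε)*(m:ℝ)))
          linarith
      exact le_mul_of_one_le_right (hpm0 w) hfac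
    have hb2 : ∑ w ∈ T, pm w *
        (Real.exp (h*((w:ℝ) - (p+ε)*(m:ℝ))) + Real.exp (h*((p-ε)*(m:ℝ) - (w:ℝ))))
        ≤ ∑ w ∈ Finset.range (m+1), pm w *
        (Real.exp (h*((w:ℝ) - (p+ε)*(m:ℝ))) + Real.exp (h*((p-ε)*(m:ℝ) - (w:ℝ)))) := by
      apply Finset.sum_le_sum_of_subset_of_nonneg (Finset.filter_subset _ _)
      intro w _ _
      positivity
    have hb3 : ∑ w ∈ Finset.range (m+1), pm w *
        (Real.exp (h*((w:ℝ) - (p+ε)*(m:ℝ))) + Real.exp (h*((p-ε)*(m:ℝ) - (w:ℝ))))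
        = Real.exp (-(h*(p+ε)*(m:ℝ))) * (∑ w ∈ Finset.range (m+1), pm w * (Real.exp h)^w)
        + Real.exp (h*(p-ε)*(m:ℝ)) * (∑ w ∈ Finset.range (m+1), pm w * (Real.exp (-h))^w) := by
      rw [Finset.mul_sum, Finset.mul_sum, ← Finset.sum_add_distrib]
      apply Finset.sum_congr rfl
      intro w _
      rw [show h*((w:ℝ) - (p+ε)*(m:ℝ)) = -(h*(p+ε)*(m:ℝ)) + (w:ℝ)*h by ring,
        show h*((p-ε)*(m:ℝ) - (w:ℝ)) = h*(p-ε)*(m:ℝ) + (w:ℝ)*(-h) by ring,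
        Real.exp_add, Real.exp_add, Real.exp_nat_mul, Real.exp_nat_mul]
      ring
    have hb4 : ∑ w ∈ Finset.range (m+1), pm w * (Real.exp h)^w
        ≤ Real.exp (h*p + h^2/8) ^ m :=
      le_trans (key _ (Real.exp_pos h))
        (pow_le_pow_left₀ (hθpos _ (Real.exp_pos h)) hθh m)
    have hb5 : ∑ w ∈ Finset.range (m+1), pm w * (Real.exp (-h))^w
        ≤ Real.exp (-(h*p) + h^2/8) ^ m :=
      le_trans (key _ (Real.exp_pos (-h)))
        (pow_le_pow_left₀ (hθpos _ (Real.exp_pos (-h))) hθh' m)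
    have hb6 : Real.exp (-(h*(p+ε)*(m:ℝ))) * Real.exp (h*p + h^2/8) ^ m
        + Real.exp (h*(p-ε)*(m:ℝ)) * Real.exp (-(h*p) + h^2/8) ^ m
        = 2 * Real.exp (-2*(m:ℝ)*ε^2) := by
      rw [← Real.exp_nat_mul, ← Real.exp_nat_mul, ← Real.exp_add, ← Real.exp_add]
      rw [show -(h*(p+ε)*(m:ℝ)) + (m:ℝ)*(h*p + h^2/8) = -2*(m:ℝ)*ε^2 by rw [hh]; ring,
        show h*(p-ε)*(m:ℝ) + (m:ℝ)*(-(h*p) + h^2/8) = -2*(m:ℝ)*ε^2 by rw [hh]; ring]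
      ring
    calc ∑ w ∈ T, pm w ≤ _ := hb1
      _ ≤ _ := hb2
      _ = _ := hb3
      _ ≤ Real.exp (-(h*(p+ε)*(m:ℝ))) * Real.exp (h*p + h^2/8) ^ m
          + Real.exp (h*(p-ε)*(m:ℝ)) * Real.exp (-(h*p) + h^2/8) ^ m := by
          apply add_le_add
          · exact mul_le_mul_of_nonneg_left hb4 (Real.exp_nonneg _)
          · exact mul_le_mul_of_nonneg_left hb5 (Real.exp_nonneg _)
      _ = 2 * Real.exp (-2*(m:ℝ)*ε^2) := hb6
  -- conclude
  apply ENNReal.toReal_le_of_le_ofReal (by positivity)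
  exact le_trans hstepA (ENNReal.ofReal_le_ofReal hstepB)
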